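/- Let X be a finite abstract simplicial complex. Given an arbitrary assignment of real values v(x) to each simplex x of X, there exists a (unique) valuation μ : S(X) → ℝ with μ(x) = v(x) for every simplex x. Explicitly, μ(A) = Σ_{a ∈ A} μ₀(a), where μ₀ is defined by Möbius inversion so that v(x) = Σ_{a ⊆ x} μ₀(a). -/

import Mathlib

/-- An abstract simplicial complex on vertex set `V`: a finite collection of
nonempty finite sets closed under nonempty subsets. -/
def IsComplex {V : Type*} [DecidableEq V] (X : Finset (Finset V)) : Prop :=
  (∀ a ∈ X, a.Nonempty) ∧ ∀ a ∈ X, ∀ b ⊆ a, b.Nonempty → b ∈ X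

/-- `A` is a subcomplex of `X`. -/
def IsSubcomplex {V : Type*} [DecidableEq V] (X A : Finset (Finset V)) : Prop :=
  A ⊆ X ∧ IsComplex A

/-- The simplex generated by a face `x`: all nonempty subsets of `x`. -/
def simplexOf {V : Type*} [DecidableEq V] (x : Finset V) : Finset (Finset V) :=
  x.powerset.erase ∅

/-- The boundary complex of the simplex on `x`: all proper nonempty subsets of `x`. -/
def boundaryOf {V : Type*} [DecidableEq V] (x : Finset V) : Finset (Finset V) :=
  (x.powerset.erase ∅).erase x

open Finset

private lemma neg_one_pow_sum' {V : Type*} [DecidableEq V] (s : Finset V) :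
    (∑ m ∈ s.powerset, (-1 : ℝ) ^ #m) = if s = ∅ then 1 else 0 := by
  have h := Finset.sum_powerset_neg_one_pow_card (x := s)
  have h2 : ((∑ m ∈ s.powerset, (-1 : ℤ) ^ #m : ℤ) : ℝ) = ∑ m ∈ s.powerset, (-1 : ℝ) ^ #m := by
    push_cast; rfl
  rw [← h2, h]; split_ifs <;> simp

private lemma inversion' {V : Type*} [DecidableEq V] (w : Finset V → ℝ) (x : Finset V) :
    ∑ a ∈ x.powerset, ∑ b ∈ a.powerset, (-1 : ℝ) ^ (#a - #b) * w b = w x := by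
  rw [Finset.sum_comm' (s' := fun b => x.powerset.filter (fun a => b ⊆ a)) (t' := x.powerset)
    (by intro a b; simp only [mem_powerset, mem_filter, mem_powerset]
        constructor
        · rintro ⟨h1, h2⟩; exact ⟨⟨h1, h2⟩, h2.trans h1⟩
        · rintro ⟨⟨h1, h2⟩, _⟩; exact ⟨h1, h2⟩)]
  have key : ∀ b ∈ x.powerset,
      (∑ a ∈ x.powerset.filter (fun a => b ⊆ a), (-1 : ℝ) ^ (#a - #b) * w b)
      = (if b = x then 1 else 0) * w b := by
    intro b hb
    rw [mem_powerset] at hb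
    rw [← Finset.sum_mul]
    congr 1
    rw [show (∑ a ∈ x.powerset.filter (fun a => b ⊆ a), (-1 : ℝ) ^ (#a - #b))
        = ∑ c ∈ (x \ b).powerset, (-1 : ℝ) ^ #c from ?_]
    · rw [neg_one_pow_sum']
      congr 1
      simp only [eq_iff_iff, sdiff_eq_empty_iff_subset]
      constructor
      · exact fun h => subset_antisymm hb h
      · exact fun h => h ▸ subset_rfl
    · refine Finset.sum_nbij' (fun a => a \ b) (fun c => b ∪ c) ?_ ?_ ?_ ?_ ?_
      · intro a ha; simp only [mem_filter, mem_powerset] at ha ⊢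
        exact sdiff_subset_sdiff ha.1 subset_rfl
      · intro c hc; simp only [mem_powerset] at hc
        simp only [mem_filter, mem_powerset]
        exact ⟨union_subset hb (hc.trans (sdiff_subset)), subset_union_left⟩
      · intro a ha; simp only [mem_filter, mem_powerset] at ha
        simp [union_sdiff_of_subset ha.2]
      · intro c hc; simp only [mem_powerset] at hc
        rw [union_sdiff_cancel_left]
        exact disjoint_sdiff.mono_right hc
      · intro a ha; simp only [mem_filter, mem_powerset] at ha
        rw [card_sdiff_of_subset ha.2]
  rw [Finset.sum_congr rfl key]
  simp only [ite_mul, one_mul, zero_mul]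
  rw [Finset.sum_ite_eq' x.powerset x w]
  simp

private noncomputable def mu0aux {V : Type*} [DecidableEq V] (v : Finset V → ℝ)
    (a : Finset V) : ℝ :=
  ∑ b ∈ a.powerset, (-1 : ℝ) ^ (#a - #b) * (if b = ∅ then 0 else v b)

private lemma mu0aux_powerset_sum {V : Type*} [DecidableEq V] (v : Finset V → ℝ)
    (x : Finset V) :
    ∑ a ∈ x.powerset, mu0aux v a = if x = ∅ then 0 else v x :=
  inversion' (fun b => if b = ∅ then 0 else v b) x

private lemma mu0aux_empty {V : Type*} [DecidableEq V] (v : Finset V → ℝ) :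
    mu0aux v ∅ = 0 := by
  have := mu0aux_powerset_sum v (∅ : Finset V)
  simpa using this

private lemma mu0aux_simplex_sum {V : Type*} [DecidableEq V] (v : Finset V → ℝ)
    {x : Finset V} (hx : x.Nonempty) :
    ∑ a ∈ simplexOf x, mu0aux v a = v x := by
  have hmem : (∅ : Finset V) ∈ x.powerset := by simp
  rw [simplexOf, Finset.sum_erase_eq_sub hmem, mu0aux_empty, mu0aux_powerset_sum,
    if_neg hx.ne_empty, sub_zero]

private lemma mem_simplexOf {V : Type*} [DecidableEq V] {x a : Finset V} :
    a ∈ simplexOf x ↔ a ⊆ x ∧ a.Nonempty := by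
  simp [simplexOf, nonempty_iff_ne_empty, and_comm]

private lemma mem_boundaryOf {V : Type*} [DecidableEq V] {x a : Finset V} :
    a ∈ boundaryOf x ↔ (a ⊆ x ∧ a.Nonempty) ∧ a ≠ x := by
  simp only [boundaryOf, mem_erase, mem_powerset, ← nonempty_iff_ne_empty]
  tauto

theorem stmt1 {V : Type*} [DecidableEq V] (X : Finset (Finset V)) (hX : IsComplex X)
    (v : Finset V → ℝ) :
    ∃ μ₀ : Finset V → ℝ,
      (∀ x ∈ X, v x = ∑ a ∈ simplexOf x, μ₀ a) ∧
      (∑ a ∈ (∅ : Finset (Finset V)), μ₀ a) = 0 ∧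
      (∀ A B, IsSubcomplex X A → IsSubcomplex X B →
        (∑ a ∈ A ∪ B, μ₀ a) = (∑ a ∈ A, μ₀ a) + (∑ a ∈ B, μ₀ a) - ∑ a ∈ A ∩ B, μ₀ a) ∧
      (∀ x ∈ X, (∑ a ∈ simplexOf x, μ₀ a) = v x) ∧
      (∀ μ' : Finset (Finset V) → ℝ, μ' ∅ = 0 →
        (∀ A B, IsSubcomplex X A → IsSubcomplex X B →
          μ' (A ∪ B) = μ' A + μ' B - μ' (A ∩ B)) →
        (∀ x ∈ X, μ' (simplexOf x) = v x) →
        ∀ A, IsSubcomplex X A → μ' A = ∑ a ∈ A, μ₀ a) := by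
  refine ⟨mu0aux v, fun x hx => (mu0aux_simplex_sum v (hX.1 x hx)).symm, by simp,
    fun A B _ _ => ?_, fun x hx => mu0aux_simplex_sum v (hX.1 x hx), ?_⟩
  · have := Finset.sum_union_inter (s₁ := A) (s₂ := B) (f := mu0aux v)
    linarith
  · intro μ' h0 hval hsim
    -- strong induction on card
    suffices h : ∀ n A, #A ≤ n → IsSubcomplex X A → μ' A = ∑ a ∈ A, mu0aux v a by
      intro A hA; exact h #A A le_rfl hA
    intro n
    induction n with
    | zero =>
      intro A hA _
      have : A = ∅ := Finset.card_eq_zero.1 (Nat.le_zero.1 hA)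
      subst this; simpa using h0
    | succ n ih =>
      intro A hcard hA
      rcases eq_or_ne A ∅ with rfl | hne
      · simpa using h0
      obtain ⟨x, hxA, hxmax⟩ := Finset.exists_max_image A (fun a => #a)
        (Finset.nonempty_iff_ne_empty.2 hne)
      have hAX : A ⊆ X := hA.1
      have hxX : x ∈ X := hAX hxA
      have hxne : x.Nonempty := hX.1 x hxX
      have hsimA : simplexOf x ⊆ A := by
        intro a ha
        rw [mem_simplexOf] at ha
        exact hA.2.2 x hxA a ha.1 ha.2
      have hsimX : IsSubcomplex X (simplexOf x) := by
        refine ⟨hsimA.trans hAX, fun a ha => (mem_simplexOf.1 ha).2, ?_⟩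
        intro a ha b hb hbne
        rw [mem_simplexOf] at ha ⊢
        exact ⟨hb.trans ha.1, hbne⟩
      have hAerase : IsSubcomplex X (A.erase x) := by
        refine ⟨(Finset.erase_subset x A).trans hAX,
          fun a ha => hX.1 a (hAX ((Finset.erase_subset x A) ha)), ?_⟩
        intro a ha b hb hbne
        rw [Finset.mem_erase] at ha ⊢
        refine ⟨?_, hA.2.2 a ha.2 b hb hbne⟩
        rintro rfl
        have hsub : b ⊂ a := hb.ssubset_of_ne (Ne.symm ha.1)
        exact absurd (hxmax a ha.2) (not_le.2 (Finset.card_lt_card hsub))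
      have hbX : IsSubcomplex X (boundaryOf x) := by
        have hbs : boundaryOf x ⊆ simplexOf x := Finset.erase_subset x (simplexOf x)
        refine ⟨hbs.trans hsimX.1, fun a ha => hsimX.2.1 a (hbs ha), ?_⟩
        intro a ha b hb hbne
        rw [mem_boundaryOf] at ha ⊢
        refine ⟨⟨hb.trans ha.1.1, hbne⟩, ?_⟩
        rintro rfl
        exact ha.2 (subset_antisymm ha.1.1 hb)
      have hunion : A.erase x ∪ simplexOf x = A := by
        apply subset_antisymm
        · exact Finset.union_subset (Finset.erase_subset x A) hsimA
        · intro a ha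
          rcases eq_or_ne a x with rfl | h
          · exact Finset.mem_union_right _ (mem_simplexOf.2 ⟨subset_rfl, hxne⟩)
          · exact Finset.mem_union_left _ (Finset.mem_erase.2 ⟨h, ha⟩)
      have hinter : A.erase x ∩ simplexOf x = boundaryOf x := by
        ext a
        simp only [Finset.mem_inter, Finset.mem_erase, mem_boundaryOf, mem_simplexOf]
        constructor
        · rintro ⟨⟨h1, _⟩, h2⟩; exact ⟨h2, h1⟩
        · rintro ⟨h1, h2⟩; exact ⟨⟨h2, hsimA (mem_simplexOf.2 h1)⟩, h1⟩
      have hveq := hval (A.erase x) (simplexOf x) hAerase hsimX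
      rw [hunion, hinter] at hveq
      have hce : #(A.erase x) ≤ n := by
        have := Finset.card_erase_of_mem hxA
        omega
      have hcb : #(boundaryOf x) ≤ n := by
        have h1 : boundaryOf x ⊆ A.erase x := by rw [← hinter]; exact Finset.inter_subset_left
        exact le_trans (Finset.card_le_card h1) hce
      have e1 := ih (A.erase x) hce hAerase
      have e2 := ih (boundaryOf x) hcb hbX
      have e3 : μ' (simplexOf x) = ∑ a ∈ simplexOf x, mu0aux v a := by
        rw [hsim x hxX, mu0aux_simplex_sum v hxne]
      have hsums := Finset.sum_union_inter (s₁ := A.erase x) (s₂ := simplexOf x)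
        (f := mu0aux v)
      rw [hunion, hinter] at hsums
      rw [hveq, e1, e2, e3]
      linarith
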